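/- (Key lemma in the proof of Theorem 1.1.) Let (𝔤, ω) be a 2n-dimensional real symplectic Lie algebra with symplectic basis (e_1,…,e_n,f_1,…,f_n), i.e. ω(e_i,e_j) = ω(f_i,f_j) = 0 and ω(e_i,f_j) = δ_{ij}. Then 𝔤 is unimodular (trace(ad_z) = 0 for all z ∈ 𝔤) if and only if Σ_{i=1}^n [e_i, f_i] = 0. -/

import Mathlib

/-- A `2n`-dimensional symplectic Lie algebra `(𝔤, ω)` with symplectic basis
`(e₁,…,eₙ,f₁,…,fₙ)` is unimodular (`trace (ad_z) = 0` for all `z`) if and only if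
`Σᵢ [eᵢ, fᵢ] = 0`. -/
theorem symplectic_unimodular_iff_sum_brackets_eq_zero
    {L : Type*} [LieRing L] [LieAlgebra ℝ L] [FiniteDimensional ℝ L] {n : ℕ}
    (ω : L →ₗ[ℝ] L →ₗ[ℝ] ℝ)
    (halt : ∀ x : L, ω x x = 0)
    (hcocycle : ∀ x y z : L, ω ⁅x, y⁆ z + ω ⁅y, z⁆ x + ω ⁅z, x⁆ y = 0)
    (b : Module.Basis (Fin n ⊕ Fin n) ℝ L)
    (hee : ∀ i j : Fin n, ω (b (Sum.inl i)) (b (Sum.inl j)) = 0)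
    (hff : ∀ i j : Fin n, ω (b (Sum.inr i)) (b (Sum.inr j)) = 0)
    (hef : ∀ i j : Fin n, ω (b (Sum.inl i)) (b (Sum.inr j)) = if i = j then 1 else 0) :
    (∀ z : L, LinearMap.trace ℝ L (LieAlgebra.ad ℝ L z) = 0) ↔
      ∑ i : Fin n, ⁅b (Sum.inl i), b (Sum.inr i)⁆ = 0 := by
  have hskew : ∀ x y : L, ω x y = - ω y x := by
    intro x y
    have h := halt (x + y)
    simp only [map_add, LinearMap.add_apply, halt] at h
    linarith
  have hfe : ∀ i j : Fin n, ω (b (Sum.inr i)) (b (Sum.inl j)) =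
      if j = i then -1 else 0 := by
    intro i j
    rw [hskew, hef]
    split <;> simp
  -- coordinate formulas
  have h1 : ∀ (x : L) (j : Fin n), ω x (b (Sum.inr j)) = b.repr x (Sum.inl j) := by
    intro x j
    conv_lhs => rw [← b.sum_repr x]
    simp only [map_sum, map_smul, LinearMap.coe_sum, Finset.sum_apply,
      LinearMap.smul_apply, smul_eq_mul]
    rw [Fintype.sum_sum_type]
    simp [hef, hff, Finset.sum_ite_eq']
  have h2 : ∀ (x : L) (j : Fin n), ω x (b (Sum.inl j)) = - b.repr x (Sum.inr j) := by
    intro x j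
    conv_lhs => rw [← b.sum_repr x]
    simp only [map_sum, map_smul, LinearMap.coe_sum, Finset.sum_apply,
      LinearMap.smul_apply, smul_eq_mul]
    rw [Fintype.sum_sum_type]
    simp [hee, hfe, Finset.sum_ite_eq']
  set S : L := ∑ i : Fin n, ⁅b (Sum.inl i), b (Sum.inr i)⁆ with hS
  have htr : ∀ z : L, LinearMap.trace ℝ L (LieAlgebra.ad ℝ L z) = - ω S z := by
    intro z
    rw [LinearMap.trace_eq_matrix_trace ℝ b, Matrix.trace]
    have hdiag : ∀ k, Matrix.diag (LinearMap.toMatrix b b (LieAlgebra.ad ℝ L z)) k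
        = b.repr ⁅z, b k⁆ k := by
      intro k
      simp [Matrix.diag, LinearMap.toMatrix_apply, LieAlgebra.ad_apply]
    simp only [hdiag]
    rw [Fintype.sum_sum_type]
    have key : ∀ i : Fin n,
        b.repr ⁅z, b (Sum.inl i)⁆ (Sum.inl i) + b.repr ⁅z, b (Sum.inr i)⁆ (Sum.inr i)
        = - ω ⁅b (Sum.inl i), b (Sum.inr i)⁆ z := by
      intro i
      have hc := hcocycle z (b (Sum.inl i)) (b (Sum.inr i))
      have e1 := h1 ⁅z, b (Sum.inl i)⁆ i
      have e2 := h2 ⁅z, b (Sum.inr i)⁆ i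
      have hs1 : ω ⁅b (Sum.inl i), b (Sum.inr i)⁆ z
          = - ω ⁅z, b (Sum.inl i)⁆ (b (Sum.inr i)) - ω ⁅b (Sum.inr i), z⁆ (b (Sum.inl i)) := by
        linarith
      have e3 : ω ⁅b (Sum.inr i), z⁆ (b (Sum.inl i))
          = - ω ⁅z, b (Sum.inr i)⁆ (b (Sum.inl i)) := by
        rw [← lie_skew z (b (Sum.inr i)), map_neg, LinearMap.neg_apply, neg_neg]
      linarith
    rw [← Finset.sum_add_distrib]
    simp only [key]
    rw [hS, map_sum, LinearMap.sum_apply, ← Finset.sum_neg_distrib]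
  constructor
  · intro h
    have hz : ∀ z : L, ω S z = 0 := by
      intro z
      have := htr z
      rw [h z] at this
      linarith
    apply b.ext_elem
    intro k
    rcases k with j | j
    · simp only [map_zero, Finsupp.coe_zero, Pi.zero_apply]
      rw [← h1 S j, hz]
    · have := h2 S j
      rw [hz] at this
      simp only [map_zero, Finsupp.coe_zero, Pi.zero_apply]
      linarith
  · intro h z
    rw [htr, h]
    simp
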